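/- arXiv:1109.3015 — 4 statements merged into one kernel-verified Lean document; each statement's English description precedes it below -/
import Mathlib

section
/- The group G = Q8 ×_{Z/2} D8 is generated by its symplectic reflections; in fact, the ten elements {±(I,ρ), ±(J,ρ), ±(K,ρ), ±(Id,σ), ±(Id,σρ)} generate G. -/
open QuaternionGroup DihedralGroup

abbrev Q8 := QuaternionGroup 2
abbrev D8 := DihedralGroup 4

/-- The central element `(-Id, -Id)` of `Q₈ × D₈`. -/
def zEl : Q8 × D8 := (a 2, r 2)

/-- The order-2 central subgroup generated by `(-Id, -Id)`. -/
def Zc : Subgroup (Q8 × D8) where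
  carrier := {1, zEl}
  one_mem' := Or.inl rfl
  mul_mem' := by
    rintro x y (rfl | rfl) (rfl | rfl) <;>
      simp only [Set.mem_insert_iff, Set.mem_singleton_iff] <;>
      first | (left; decide) | (right; decide)
  inv_mem' := by
    rintro x (rfl | rfl) <;>
      simp only [Set.mem_insert_iff, Set.mem_singleton_iff] <;>
      first | (left; decide) | (right; decide)

instance : Zc.Normal := by
  constructor
  intro x hx g
  have hx' : x = 1 ∨ x = zEl := hx
  rcases hx' with rfl | rfl
  · simpa using Zc.one_mem
  · have h : g * zEl * g⁻¹ = zEl := by revert g; decide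
    rw [h]
    exact Or.inr rfl

instance : DecidablePred (· ∈ Zc) := fun x =>
  decidable_of_iff (x = 1 ∨ x = zEl) Iff.rfl

/-- The central product `G = Q₈ ×_{ℤ/2} D₈`, the quotient of `Q₈ × D₈` by the
central subgroup generated by `(-Id, -Id)`. -/
abbrev G32 := (Q8 × D8) ⧸ Zc

/-- The central element `-Id` of `G = Q₈ ×_{ℤ/2} D₈`. -/
def negId : G32 := QuotientGroup.mk (a 2, 1)

/-- The symplectic reflections of `G = Q₈ ×_{ℤ/2} D₈`: its noncentral involutions. -/
def reflSet : Set G32 := {g | g ^ 2 = 1 ∧ g ≠ 1 ∧ g ≠ negId}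

theorem upT : Subgroup.closure ({(a 1, r 1), (xa 0, r 1), (xa 1, r 1), ((1:Q8), sr 0), ((1:Q8), sr 1)} : Set (Q8 × D8)) = ⊤ := by
  rw [Subgroup.eq_top_iff']
  intro g
  set H := Subgroup.closure ({(a 1, r 1), (xa 0, r 1), (xa 1, r 1), ((1:Q8), sr 0), ((1:Q8), sr 1)} : Set (Q8 × D8)) with hH
  have h1 : (a 1, r 1) ∈ H := Subgroup.subset_closure (by simp)
  have h2 : (xa 0, r 1) ∈ H := Subgroup.subset_closure (by simp)
  have h4 : ((1:Q8), sr 0) ∈ H := Subgroup.subset_closure (by simp)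
  have h5 : ((1:Q8), sr 1) ∈ H := Subgroup.subset_closure (by simp)
  have hR : ((1:Q8), r 1) ∈ H := by
    have e : (((1:Q8), sr 0) : Q8 × D8) * ((1:Q8), sr 1) = ((1:Q8), r 1) := by decide
    rw [← e]; exact mul_mem h4 h5
  have hA : (a 1, (1:D8)) ∈ H := by
    have e : ((a 1, r 1) : Q8 × D8) * ((1:Q8), r 1)⁻¹ = (a 1, (1:D8)) := by decide
    rw [← e]; exact mul_mem h1 (inv_mem hR)
  have hX : (xa 0, (1:D8)) ∈ H := by
    have e : ((xa 0, r 1) : Q8 × D8) * ((1:Q8), r 1)⁻¹ = (xa 0, (1:D8)) := by decide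
    rw [← e]; exact mul_mem h2 (inv_mem hR)
  obtain ⟨p, q, m, n, hg⟩ : ∃ p q m n : Fin 4,
      g = (a 1, (1:D8)) ^ (p:ℕ) * (xa 0, (1:D8)) ^ (q:ℕ) * ((1:Q8), r 1) ^ (m:ℕ) * ((1:Q8), sr 0) ^ (n:ℕ) := by
    revert g; decide
  rw [hg]
  exact mul_mem (mul_mem (mul_mem (pow_mem hA _) (pow_mem hX _)) (pow_mem hR _)) (pow_mem h4 _)

lemma hsq (x : Q8 × D8) (h : x * x ∈ Zc) : (QuotientGroup.mk x : G32) ^ 2 = 1 := by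
  rw [pow_two, ← QuotientGroup.mk_mul]
  exact (QuotientGroup.eq_one_iff _).mpr h

lemma hne1 (x : Q8 × D8) (h : x ∉ Zc) : (QuotientGroup.mk x : G32) ≠ 1 :=
  fun c => h ((QuotientGroup.eq_one_iff _).mp c)

lemma hnen (x : Q8 × D8) (h : x⁻¹ * (a 2, 1) ∉ Zc) : (QuotientGroup.mk x : G32) ≠ negId :=
  fun c => h (QuotientGroup.eq.mp c)

lemma negId_mul (x : Q8 × D8) :
    negId * QuotientGroup.mk x = (QuotientGroup.mk ((a 2, 1) * x) : G32) :=
  rfl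


/-- `G = Q₈ ×_{ℤ/2} D₈` is generated by its symplectic reflections
(= noncentral involutions); in fact, the ten elements
`±(I,ρ), ±(J,ρ), ±(K,ρ), ±(Id,σ), ±(Id,σρ)` generate `G`. -/
theorem generated_by_symplectic_reflections :
    Subgroup.closure reflSet = ⊤ ∧
    Subgroup.closure ({QuotientGroup.mk (a 1, r 1), negId * QuotientGroup.mk (a 1, r 1),
      QuotientGroup.mk (xa 0, r 1), negId * QuotientGroup.mk (xa 0, r 1),
      QuotientGroup.mk (xa 1, r 1), negId * QuotientGroup.mk (xa 1, r 1),
      QuotientGroup.mk (1, sr 0), negId * QuotientGroup.mk (1, sr 0),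
      QuotientGroup.mk (1, sr 1), negId * QuotientGroup.mk (1, sr 1)} : Set G32) = ⊤ := by
  have hmap : Subgroup.closure ((QuotientGroup.mk' Zc) ''
      ({(a 1, r 1), (xa 0, r 1), (xa 1, r 1), ((1:Q8), sr 0), ((1:Q8), sr 1)} : Set (Q8 × D8))) = ⊤ := by
    rw [← MonoidHom.map_closure, upT, Subgroup.map_top_of_surjective _ (QuotientGroup.mk'_surjective Zc)]
  set S : Set G32 := {QuotientGroup.mk (a 1, r 1), negId * QuotientGroup.mk (a 1, r 1),
      QuotientGroup.mk (xa 0, r 1), negId * QuotientGroup.mk (xa 0, r 1),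
      QuotientGroup.mk (xa 1, r 1), negId * QuotientGroup.mk (xa 1, r 1),
      QuotientGroup.mk (1, sr 0), negId * QuotientGroup.mk (1, sr 0),
      QuotientGroup.mk (1, sr 1), negId * QuotientGroup.mk (1, sr 1)} with hSdef
  have hTS : (QuotientGroup.mk' Zc) ''
      ({(a 1, r 1), (xa 0, r 1), (xa 1, r 1), ((1:Q8), sr 0), ((1:Q8), sr 1)} : Set (Q8 × D8)) ⊆ S := by
    rintro _ ⟨t, ht, rfl⟩
    simp only [hSdef, Set.mem_insert_iff, Set.mem_singleton_iff] at ht ⊢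
    rcases ht with rfl | rfl | rfl | rfl | rfl
    · exact Or.inl rfl
    · exact Or.inr (Or.inr (Or.inl rfl))
    · exact Or.inr (Or.inr (Or.inr (Or.inr (Or.inl rfl))))
    · exact Or.inr (Or.inr (Or.inr (Or.inr (Or.inr (Or.inr (Or.inl rfl))))))
    · exact Or.inr (Or.inr (Or.inr (Or.inr (Or.inr (Or.inr (Or.inr (Or.inr (Or.inl rfl))))))))
  have h2 : Subgroup.closure S = ⊤ := top_le_iff.mp (hmap ▸ Subgroup.closure_mono hTS)
  refine ⟨?_, h2⟩
  have hSR : S ⊆ reflSet := by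
    intro g hg
    simp only [hSdef, Set.mem_insert_iff, Set.mem_singleton_iff, negId_mul] at hg
    rcases hg with rfl | rfl | rfl | rfl | rfl | rfl | rfl | rfl | rfl | rfl <;>
      exact ⟨hsq _ (by decide), hne1 _ (by decide), hnen _ (by decide)⟩
  exact top_le_iff.mp (h2 ▸ Subgroup.closure_mono hSR)
end

section
/- Any automorphism of G = Q8 ×_{Z/2} D8 that fixes each of the five conjugacy classes of noncentral involutions (i.e., maps each class to itself setwise) is an inner automorphism. -/
open QuaternionGroup DihedralGroup

instance G32rel : DecidableRel (fun x y => (QuotientGroup.leftRel Zc) x y) := fun p q =>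
  decidable_of_iff (p⁻¹ * q ∈ Zc) (QuotientGroup.leftRel_apply).symm

instance G32deq : DecidableEq G32 := @Quotient.decidableEq _ _ G32rel

instance G32fin : Fintype G32 := @Quotient.fintype _ _ (QuotientGroup.leftRel Zc) G32rel

def t1 : G32 := QuotientGroup.mk (a 1, r 1)
def t2 : G32 := QuotientGroup.mk (xa 0, r 1)
def t3 : G32 := QuotientGroup.mk (xa 1, r 1)
def t4 : G32 := QuotientGroup.mk (1, sr 0)
def t5 : G32 := QuotientGroup.mk (1, sr 1)

def u1 : G32 := QuotientGroup.mk (a 1, 1)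
def u2 : G32 := QuotientGroup.mk (xa 0, 1)
def u3 : G32 := QuotientGroup.mk (1, r 1)
def u4 : G32 := QuotientGroup.mk (1, sr 0)

def Sgen : Set G32 := {t1, t2, t3, t4, t5}

lemma surj : ∀ g : G32, ∃ (i : Fin 4) (j k l : Fin 2),
    u1 ^ (i : ℕ) * u2 ^ (j : ℕ) * u3 ^ (k : ℕ) * u4 ^ (l : ℕ) = g := by decide

lemma gen : ∀ x : G32, x ∈ Subgroup.closure Sgen := by
  have ht1 : t1 ∈ Subgroup.closure Sgen := Subgroup.subset_closure (Or.inl rfl)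
  have ht2 : t2 ∈ Subgroup.closure Sgen := Subgroup.subset_closure (Or.inr (Or.inl rfl))
  have ht4 : t4 ∈ Subgroup.closure Sgen :=
    Subgroup.subset_closure (Or.inr (Or.inr (Or.inr (Or.inl rfl))))
  have ht5 : t5 ∈ Subgroup.closure Sgen :=
    Subgroup.subset_closure (Or.inr (Or.inr (Or.inr (Or.inr rfl))))
  have hu3 : u3 ∈ Subgroup.closure Sgen := by
    have : u3 = t4 * t5 := by decide
    rw [this]; exact mul_mem ht4 ht5
  have hu1 : u1 ∈ Subgroup.closure Sgen := by
    have : u1 = t1 * u3⁻¹ := by decide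
    rw [this]; exact mul_mem ht1 (inv_mem hu3)
  have hu2 : u2 ∈ Subgroup.closure Sgen := by
    have : u2 = t2 * u3⁻¹ := by decide
    rw [this]; exact mul_mem ht2 (inv_mem hu3)
  intro x
  obtain ⟨i, j, k, l, rfl⟩ := surj x
  exact mul_mem (mul_mem (mul_mem (pow_mem hu1 _) (pow_mem hu2 _)) (pow_mem hu3 _))
    (pow_mem ht4 _)

lemma conj1 : ∀ y : G32, IsConj t1 y → y = t1 ∨ y = negId * t1 := by decide
lemma conj2 : ∀ y : G32, IsConj t2 y → y = t2 ∨ y = negId * t2 := by decide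
lemma conj3 : ∀ y : G32, IsConj t3 y → y = t3 ∨ y = negId * t3 := by decide
lemma conj4 : ∀ y : G32, IsConj t4 y → y = t4 ∨ y = negId * t4 := by decide
lemma conj5 : ∀ y : G32, IsConj t5 y → y = t5 ∨ y = negId * t5 := by decide

lemma central_unique : ∀ y : G32, (∀ x, x * y = y * x) → y ≠ 1 → y = negId := by decide

def w (b : Bool) (t : G32) : G32 := if b then negId * t else t

lemma key : ∀ b1 b2 b3 b4 b5 : Bool,
    w b1 t1 * w b2 t2 * w b3 t3 = negId * (w b4 t4 * w b5 t5) →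
    ∃ g : G32, g * t1 * g⁻¹ = w b1 t1 ∧ g * t2 * g⁻¹ = w b2 t2 ∧ g * t3 * g⁻¹ = w b3 t3 ∧
      g * t4 * g⁻¹ = w b4 t4 ∧ g * t5 * g⁻¹ = w b5 t5 := by decide
/-- any automorphism of `G = Q₈ ×_{ℤ/2} D₈` fixing each of the five
conjugacy classes of noncentral involutions setwise (i.e. sending every noncentral
involution to a conjugate of itself) is inner. -/
theorem class_preserving_automorphism_is_inner :
    ∀ f : MulAut G32,
      (∀ g : G32, g ^ 2 = 1 → g ≠ 1 → g ∉ Subgroup.center G32 → IsConj g (f g)) →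
      f ∈ (MulAut.conj : G32 →* MulAut G32).range := by
  intro f hf
  have hz : f negId = negId := by
    apply central_unique
    · intro x
      have hc : ∀ y : G32, y * negId = negId * y := by decide
      calc x * f negId = f (f.symm x * negId) := by
              rw [map_mul, MulEquiv.apply_symm_apply]
        _ = f (negId * f.symm x) := by rw [hc]
        _ = f negId * x := by rw [map_mul, MulEquiv.apply_symm_apply]
    · have hne : negId ≠ (1 : G32) := by decide
      exact fun h => hne (f.injective (h.trans (map_one f).symm))
  have e1 := conj1 _ (hf t1 (by decide) (by decide)
    (fun h => absurd (Subgroup.mem_center_iff.mp h t4) (by decide)))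
  have e2 := conj2 _ (hf t2 (by decide) (by decide)
    (fun h => absurd (Subgroup.mem_center_iff.mp h t1) (by decide)))
  have e3 := conj3 _ (hf t3 (by decide) (by decide)
    (fun h => absurd (Subgroup.mem_center_iff.mp h t1) (by decide)))
  have e4 := conj4 _ (hf t4 (by decide) (by decide)
    (fun h => absurd (Subgroup.mem_center_iff.mp h t1) (by decide)))
  have e5 := conj5 _ (hf t5 (by decide) (by decide)
    (fun h => absurd (Subgroup.mem_center_iff.mp h t1) (by decide)))
  obtain ⟨b1, hb1⟩ : ∃ b, f t1 = w b t1 :=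
    e1.elim (fun h => ⟨false, h⟩) (fun h => ⟨true, h⟩)
  obtain ⟨b2, hb2⟩ : ∃ b, f t2 = w b t2 :=
    e2.elim (fun h => ⟨false, h⟩) (fun h => ⟨true, h⟩)
  obtain ⟨b3, hb3⟩ : ∃ b, f t3 = w b t3 :=
    e3.elim (fun h => ⟨false, h⟩) (fun h => ⟨true, h⟩)
  obtain ⟨b4, hb4⟩ : ∃ b, f t4 = w b t4 :=
    e4.elim (fun h => ⟨false, h⟩) (fun h => ⟨true, h⟩)
  obtain ⟨b5, hb5⟩ : ∃ b, f t5 = w b t5 :=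
    e5.elim (fun h => ⟨false, h⟩) (fun h => ⟨true, h⟩)
  have hrel : t1 * t2 * t3 = negId * (t4 * t5) := by decide
  have hmul : w b1 t1 * w b2 t2 * w b3 t3 = negId * (w b4 t4 * w b5 t5) := by
    rw [← hb1, ← hb2, ← hb3, ← hb4, ← hb5, ← map_mul, ← map_mul, hrel, map_mul, map_mul, hz]
  obtain ⟨g, h1, h2, h3, h4, h5⟩ := key b1 b2 b3 b4 b5 hmul
  refine ⟨g, ?_⟩
  have hS : Set.EqOn ((MulAut.conj g : MulAut G32) : G32 →* G32) (f : G32 →* G32) Sgen := by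
    rintro x (rfl | rfl | rfl | rfl | rfl)
    · show g * t1 * g⁻¹ = f t1; rw [h1, hb1]
    · show g * t2 * g⁻¹ = f t2; rw [h2, hb2]
    · show g * t3 * g⁻¹ = f t3; rw [h3, hb3]
    · show g * t4 * g⁻¹ = f t4; rw [h4, hb4]
    · show g * t5 * g⁻¹ = f t5; rw [h5, hb5]
  have h := MonoidHom.eqOn_closure hS
  exact MulEquiv.ext fun x => h (gen x)
end

section
/- For every symplectic reflection s in G = Q8 ×_{Z/2} D8, the stabilizer in G of a generic point of the fixed plane V^s ⊂ C^4 is exactly the order-2 subgroup ⟨s⟩; more precisely, if p ∈ G fixes all of V^s then p ∈ {Id, s}. -/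
open Matrix Kronecker

noncomputable section

/-- The matrix `I` of the quaternion group `Q₈ < SL₂(ℂ)`. -/
def Iq : Matrix (Fin 2) (Fin 2) ℂ := !![Complex.I, 0; 0, -Complex.I]
/-- The matrix `J` of the quaternion group `Q₈ < SL₂(ℂ)`. -/
def Jq : Matrix (Fin 2) (Fin 2) ℂ := !![0, -1; 1, 0]
/-- The matrix `K` of the quaternion group `Q₈ < SL₂(ℂ)`. -/
def Kq : Matrix (Fin 2) (Fin 2) ℂ := !![0, -Complex.I; -Complex.I, 0]
/-- The rotation `ρ` of the dihedral group `D₈ < O₂(ℂ)`. -/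
def ρm : Matrix (Fin 2) (Fin 2) ℂ := !![0, -1; 1, 0]
/-- The reflection `σ` of the dihedral group `D₈ < O₂(ℂ)`. -/
def σm : Matrix (Fin 2) (Fin 2) ℂ := !![0, 1; 1, 0]

/-- The quaternion group `Q₈` realized as a matrix group (as a submonoid; it is
a group since all its elements are invertible matrices). -/
def Qcl : Submonoid (Matrix (Fin 2) (Fin 2) ℂ) := Submonoid.closure {Iq, Jq, Kq}
/-- The dihedral group `D₈` realized as a matrix group. -/
def Dcl : Submonoid (Matrix (Fin 2) (Fin 2) ℂ) := Submonoid.closure {ρm, σm}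

-- auxiliary
abbrev GI := GaussianInt

def ii : GI := ⟨0,1⟩
def IqZ : Matrix (Fin 2) (Fin 2) GI := !![ii, 0; 0, -ii]
def JqZ : Matrix (Fin 2) (Fin 2) GI := !![0, -1; 1, 0]
def KqZ : Matrix (Fin 2) (Fin 2) GI := !![0, -ii; -ii, 0]
def ρZ : Matrix (Fin 2) (Fin 2) GI := !![0, -1; 1, 0]
def σZ : Matrix (Fin 2) (Fin 2) GI := !![0, 1; 1, 0]

def QL : List (Matrix (Fin 2) (Fin 2) GI) := [1, -1, IqZ, -IqZ, JqZ, -JqZ, KqZ, -KqZ]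
def DL : List (Matrix (Fin 2) (Fin 2) GI) :=
  [1, -1, ρZ, -ρZ, σZ, -σZ, !![(-1:GI),0;0,1], !![(1:GI),0;0,-1]]

lemma QL_mul : ∀ a ∈ QL, ∀ b ∈ QL, a * b ∈ QL := by decide
lemma DL_mul : ∀ a ∈ DL, ∀ b ∈ DL, a * b ∈ DL := by decide

def φc : GI →+* ℂ := GaussianInt.toComplex

lemma Iq_eq : Iq = IqZ.map φc := by
  ext i j
  fin_cases i <;> fin_cases j <;>
    simp [Iq, IqZ, φc, ii, Matrix.map_apply, GaussianInt.toComplex_def]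

def SLL : List (Matrix (Fin 2 × Fin 2) (Fin 2 × Fin 2) GI) :=
  QL.flatMap fun g => DL.map fun h => g ⊗ₖ h

set_option maxHeartbeats 8000000 in
set_option maxRecDepth 10000 in
lemma key_s17 : ∀ s ∈ SLL, s = 1 ∨ (s - 1).det ≠ 0 ∨
    (s * s = 1 ∧ ∀ p ∈ SLL, p * (s + 1) = s + 1 → (p = 1 ∨ p = s)) := by decide

lemma Jq_eq : Jq = JqZ.map φc := by
  ext i j
  fin_cases i <;> fin_cases j <;>
    simp [Jq, JqZ, φc, Matrix.map_apply]

lemma Kq_eq : Kq = KqZ.map φc := by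
  ext i j
  fin_cases i <;> fin_cases j <;>
    simp [Kq, KqZ, φc, ii, Matrix.map_apply, GaussianInt.toComplex_def]

lemma ρm_eq : ρm = ρZ.map φc := by
  ext i j
  fin_cases i <;> fin_cases j <;> simp [ρm, ρZ, φc, Matrix.map_apply]

lemma σm_eq : σm = σZ.map φc := by
  ext i j
  fin_cases i <;> fin_cases j <;> simp [σm, σZ, φc, Matrix.map_apply]

lemma map_one' {n : Type*} [Fintype n] [DecidableEq n] :
    (1 : Matrix n n GI).map φc = 1 :=
  Matrix.map_one φc (map_zero φc) (map_one φc)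

lemma mem_Q {g : Matrix (Fin 2) (Fin 2) ℂ} (hg : g ∈ Qcl) :
    ∃ m ∈ QL, g = m.map φc := by
  induction hg using Submonoid.closure_induction with
  | mem x hx =>
    rcases hx with rfl | rfl | rfl
    · exact ⟨IqZ, by decide, Iq_eq⟩
    · exact ⟨JqZ, by decide, Jq_eq⟩
    · exact ⟨KqZ, by decide, Kq_eq⟩
  | one => exact ⟨1, by decide, map_one'.symm⟩
  | mul a b _ _ iha ihb =>
    obtain ⟨ma, hma, rfl⟩ := iha
    obtain ⟨mb, hmb, rfl⟩ := ihb
    exact ⟨ma * mb, QL_mul ma hma mb hmb, (Matrix.map_mul (f := φc)).symm⟩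

lemma mem_D {h : Matrix (Fin 2) (Fin 2) ℂ} (hh : h ∈ Dcl) :
    ∃ m ∈ DL, h = m.map φc := by
  induction hh using Submonoid.closure_induction with
  | mem x hx =>
    rcases hx with rfl | rfl
    · exact ⟨ρZ, by decide, ρm_eq⟩
    · exact ⟨σZ, by decide, σm_eq⟩
  | one => exact ⟨1, by decide, map_one'.symm⟩
  | mul a b _ _ iha ihb =>
    obtain ⟨ma, hma, rfl⟩ := iha
    obtain ⟨mb, hmb, rfl⟩ := ihb
    exact ⟨ma * mb, DL_mul ma hma mb hmb, (Matrix.map_mul (f := φc)).symm⟩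

lemma kron_map (a b : Matrix (Fin 2) (Fin 2) GI) :
    (a.map φc) ⊗ₖ (b.map φc) = (a ⊗ₖ b).map φc := by
  ext ⟨i, k⟩ ⟨j, l⟩
  simp [Matrix.kroneckerMap_apply, Matrix.map_apply]

lemma map_inj {n : Type*} {a b : Matrix n n GI} (h : a.map φc = b.map φc) :
    a = b := by
  exact Matrix.ext fun i j =>
    GaussianInt.toComplex_injective (congrFun (congrFun h i) j)

lemma mem_SLL {g h : Matrix (Fin 2) (Fin 2) GI} (hg : g ∈ QL) (hh : h ∈ DL) :
    g ⊗ₖ h ∈ SLL := by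
  simp only [SLL, List.mem_flatMap, List.mem_map]
  exact ⟨g, hg, h, hh, rfl⟩


/-- for every symplectic reflection `s = g ⊗ₖ h` in
`G = Q₈ ×_{ℤ/2} D₈`, the subgroup of elements of `G` fixing the plane
`V^s ⊂ ℂ⁴` pointwise is exactly `⟨s⟩ = {Id, s}`: if `p = g' ⊗ₖ h'` fixes all of
`V^s` then `p ∈ {Id, s}`. -/
theorem generic_stabilizer_of_reflection_plane :
    ∀ g ∈ Qcl, ∀ h ∈ Dcl, (g ⊗ₖ h - 1).rank = 2 →
      ∀ g' ∈ Qcl, ∀ h' ∈ Dcl,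
        (∀ v : Fin 2 × Fin 2 → ℂ, (g ⊗ₖ h).mulVec v = v → (g' ⊗ₖ h').mulVec v = v) →
        (g' ⊗ₖ h' = 1 ∨ g' ⊗ₖ h' = g ⊗ₖ h) := by
  intro g hg h hh hrank g' hg' h' hh' hfix
  obtain ⟨gz, hgz, rfl⟩ := mem_Q hg
  obtain ⟨hz, hhz, rfl⟩ := mem_D hh
  obtain ⟨gz', hgz', rfl⟩ := mem_Q hg'
  obtain ⟨hz', hhz', rfl⟩ := mem_D hh'
  rw [kron_map] at hrank hfix ⊢
  rw [kron_map] at hfix ⊢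
  set sZ := gz ⊗ₖ hz with hsZ
  set pZ := gz' ⊗ₖ hz' with hpZ
  rcases key_s17 sZ (mem_SLL hgz hhz) with h1 | hdet | ⟨hs2, hkey⟩
  · exfalso
    rw [h1, map_one', sub_self] at hrank
    rw [Matrix.rank_zero] at hrank
    exact two_ne_zero hrank.symm
  · exfalso
    have h1 : sZ.map φc - 1 = (sZ - 1).map φc := by
      rw [Matrix.map_sub φc (map_sub φc), map_one']
    have hdet' : (sZ.map φc - 1).det ≠ 0 := by
      have h2 : (sZ - 1).map φc = φc.mapMatrix (sZ - 1) := rfl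
      rw [h1, h2, ← RingHom.map_det]
      exact fun hc => hdet (GaussianInt.toComplex_injective (hc.trans (map_zero φc).symm))
    have hu : IsUnit (sZ.map φc - 1) :=
      (Matrix.isUnit_iff_isUnit_det _).mpr (Ne.isUnit hdet')
    rw [Matrix.rank_of_isUnit _ hu] at hrank
    simp at hrank
  · -- reflection case
    have hs2c : (sZ.map φc) * (sZ.map φc) = 1 := by
      rw [← Matrix.map_mul (f := φc), hs2, map_one']
    have hfixcols : (pZ.map φc) * (sZ.map φc + 1) = sZ.map φc + 1 := by
      have hss : (sZ.map φc) * (sZ.map φc + 1) = sZ.map φc + 1 := by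
        rw [mul_add, hs2c, mul_one, add_comm]
      ext i j
      have hv := hfix ((sZ.map φc + 1).mulVec (Pi.single j 1)) (by
        rw [Matrix.mulVec_mulVec, hss])
      rw [Matrix.mulVec_mulVec] at hv
      simpa [Matrix.mulVec_mulVec, Matrix.mulVec_single] using congrFun hv i
    have hz : pZ * (sZ + 1) = sZ + 1 := by
      apply map_inj
      rwa [Matrix.map_mul (f := φc), Matrix.map_add φc (map_add φc), map_one']
    rcases hkey pZ (mem_SLL hgz' hhz') hz with h2 | h2
    · left; rw [h2]; exact map_one'
    · right; rw [h2]
end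
end

section
/- In G = Q8 ×_{Z/2} D8, every element h ∉ {Id, −Id} that is not a symplectic reflection can be written as a product h = g·s of two distinct symplectic reflections g, s ∈ G. -/
open QuaternionGroup DihedralGroup

/-- A symplectic reflection of `G = Q₈ ×_{ℤ/2} D₈`: a noncentral involution. -/
def IsSymplRefl (g : G32) : Prop := g ^ 2 = 1 ∧ g ≠ 1 ∧ g ≠ negId

def SR' (x : Q8 × D8) : Prop := x ^ 2 ∈ Zc ∧ x ∉ Zc ∧ x⁻¹ * (a 2, 1) ∉ Zc

instance : DecidablePred SR' := fun _ => instDecidableAnd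

lemma mk_eq_iff (x y : Q8 × D8) :
    (QuotientGroup.mk x : G32) = QuotientGroup.mk y ↔ x⁻¹ * y ∈ Zc :=
  QuotientGroup.eq

lemma sr_iff (x : Q8 × D8) : IsSymplRefl (QuotientGroup.mk x) ↔ SR' x := by
  unfold IsSymplRefl SR' negId
  rw [show ((QuotientGroup.mk x : G32) ^ 2) = QuotientGroup.mk (x ^ 2) from rfl,
    QuotientGroup.eq_one_iff]
  simp [Ne, QuotientGroup.eq_one_iff, mk_eq_iff]

lemma key_s18 : ∀ x : Q8 × D8, x ∉ Zc → x⁻¹ * (a 2, 1) ∉ Zc → ¬ SR' x →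
    ∃ g s : Q8 × D8, SR' g ∧ SR' s ∧ g⁻¹ * s ∉ Zc ∧ (g * s)⁻¹ * x ∈ Zc := by
  set_option maxRecDepth 100000 in decide

/-- every element `h ∉ {Id, -Id}` of `G = Q₈ ×_{ℤ/2} D₈` that is not
a symplectic reflection is a product `h = g·s` of two distinct symplectic
reflections. -/
theorem nonreflection_is_product_of_two_reflections :
    ∀ h : G32, h ≠ 1 → h ≠ negId → ¬ IsSymplRefl h →
      ∃ g s : G32, IsSymplRefl g ∧ IsSymplRefl s ∧ g ≠ s ∧ h = g * s := by
  intro h h1 h2 h3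
  obtain ⟨x, rfl⟩ := QuotientGroup.mk_surjective h
  rw [Ne, QuotientGroup.eq_one_iff] at h1
  rw [Ne, show negId = QuotientGroup.mk (a 2, 1) from rfl, mk_eq_iff] at h2
  rw [sr_iff] at h3
  obtain ⟨g, s, hg, hs, hgs, hx⟩ := key_s18 x h1 h2 h3
  refine ⟨QuotientGroup.mk g, QuotientGroup.mk s, (sr_iff g).2 hg, (sr_iff s).2 hs, ?_, ?_⟩
  · rw [Ne, mk_eq_iff]; exact hgs
  · exact ((mk_eq_iff (g * s) x).2 hx).symm
end
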